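/- Let λ ∈ (0,1), γ ∈ (0,1), and b ≥ 0, and define for real t > 0 the functions p(t) := λ·(1 + b·γ^{t+1})/(1 + b·γ^t) and g(t) := e^{1/t} · p(t)/(1 − p(t)). Then there exists T > 0 such that g is strictly decreasing (equivalently, its derivative is negative) on [T, ∞), and g(t) converges to λ/(1 − λ) as t → ∞. -/

import Mathlib

open Filter Real Set

private lemma aux_ineq (K A B L C t e e1 : ℝ) (hK : 0 < K) (hA0 : 0 ≤ A)
    (hB0 : 0 ≤ B) (hAB : A ≤ B) (hC : C = -L*(B-A)) (hL : L < 0) (ht1 : 1 ≤ t)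
    (he0 : 0 < e) (he1 : e ≤ 1) (he10 : 0 < e1)
    (hbig : C*(1+B)*(t^2*e) < 1) :
    K * ((e1 * (-(t^2)⁻¹)) * ((1+A*e)/(1+B*e))
      + e1 * ((A*(e*L)*(1+B*e) - (1+A*e)*(B*(e*L)))/(1+B*e)^2)) < 0 := by
  have ht0 : (0:ℝ) < t := by linarith
  have hDn0 : (0:ℝ) < 1 + B*e := by positivity
  have hC0 : 0 ≤ C := by nlinarith
  have hnum : A*(e*L)*(1+B*e) - (1+A*e)*(B*(e*L)) = C*e := by rw [hC]; ring
  rw [hnum]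
  have h1 : C*e/(1+B*e)^2 ≤ C*e := by
    have hsq : (1:ℝ) ≤ (1+B*e)^2 := by nlinarith [mul_nonneg hB0 he0.le, sq_nonneg (B*e)]
    calc C*e/(1+B*e)^2 ≤ C*e/1 :=
          div_le_div_of_nonneg_left (by positivity) one_pos hsq
      _ = C*e := by ring
  have h2 : C*e < 1/((1+B)*t^2) := by
    rw [lt_div_iff₀ (by positivity)]
    nlinarith
  have hq : 1/(1+B) ≤ (1+A*e)/(1+B*e) :=
    div_le_div₀ (by nlinarith) (by nlinarith) hDn0 (by nlinarith)
  have h3 : 1/((1+B)*t^2) ≤ (t^2)⁻¹ * ((1+A*e)/(1+B*e)) := by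
    have h4 : 1/((1+B)*t^2) = (t^2)⁻¹ * (1/(1+B)) := by
      rw [one_div, mul_inv, one_div]; ring
    rw [h4]
    exact mul_le_mul_of_nonneg_left hq (by positivity)
  have total : C*e/(1+B*e)^2 < (t^2)⁻¹ * ((1+A*e)/(1+B*e)) :=
    lt_of_lt_of_le (lt_of_le_of_lt h1 h2) h3
  have hfin := mul_lt_mul_of_pos_left total (mul_pos hK he10)
  nlinarith [hfin]

private lemma aux_deriv (K A B L : ℝ) (t : ℝ) (ht : t ≠ 0) (hB0 : 0 ≤ B) :
    HasDerivAt (fun s => K * (Real.exp (1/s) * ((1 + A*Real.exp (L*s))/(1 + B*Real.exp (L*s)))))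
      (K * ((Real.exp (1/t) * (-(t^2)⁻¹)) * ((1 + A*Real.exp (L*t))/(1 + B*Real.exp (L*t)))
        + Real.exp (1/t) * ((A*(Real.exp (L*t)*L)*(1+B*Real.exp (L*t))
            - (1+A*Real.exp (L*t))*(B*(Real.exp (L*t)*L)))/(1+B*Real.exp (L*t))^2))) t := by
  have hDn : (1 + B * Real.exp (L*t)) ≠ 0 := by positivity
  have h1t : HasDerivAt (fun s : ℝ => 1/s) (-(t^2)⁻¹) t := by
    simpa [one_div] using hasDerivAt_inv ht
  have hexp1 := h1t.exp
  have hLt : HasDerivAt (fun s : ℝ => L*s) L t := by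
    simpa using (hasDerivAt_id t).const_mul L
  have he := hLt.exp
  have hN : HasDerivAt (fun s : ℝ => 1 + A*Real.exp (L*s)) (A*(Real.exp (L*t)*L)) t :=
    (he.const_mul A).const_add 1
  have hDd : HasDerivAt (fun s : ℝ => 1 + B*Real.exp (L*s)) (B*(Real.exp (L*t)*L)) t :=
    (he.const_mul B).const_add 1
  exact ((hexp1.mul (hN.div hDd hDn)).const_mul K)

/-- With `λ, γ ∈ (0,1)`, `b ≥ 0`, `p(t) = λ(1 + bγ^{t+1})/(1 + bγ^t)` and
`g(t) = e^{1/t}·p(t)/(1 - p(t))` (real powers), there is `T > 0` such that `g` is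
strictly decreasing on `[T, ∞)` and `g(t) → λ/(1-λ)` as `t → ∞`. -/
theorem estimator_factor_eventually_decreasing (lam γ b : ℝ)
    (hlam : lam ∈ Set.Ioo (0 : ℝ) 1) (hγ : γ ∈ Set.Ioo (0 : ℝ) 1) (hb : 0 ≤ b)
    (p g : ℝ → ℝ)
    (hp : ∀ t : ℝ, p t = lam * (1 + b * γ ^ (t + 1)) / (1 + b * γ ^ t))
    (hg : ∀ t : ℝ, g t = Real.exp (1 / t) * p t / (1 - p t)) :
    ∃ T : ℝ, 0 < T ∧ StrictAntiOn g (Set.Ici T) ∧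
      Filter.Tendsto g Filter.atTop (nhds (lam / (1 - lam))) := by
  obtain ⟨hlam0, hlam1⟩ := hlam
  obtain ⟨hγ0, hγ1⟩ := hγ
  have h1lam : (0:ℝ) < 1 - lam := by linarith
  obtain ⟨L, hLdef⟩ : ∃ L : ℝ, L = Real.log γ := ⟨_, rfl⟩
  have hL : L < 0 := hLdef ▸ Real.log_neg hγ0 hγ1
  obtain ⟨A, hAdef⟩ : ∃ A : ℝ, A = b * γ := ⟨_, rfl⟩
  obtain ⟨B, hBdef⟩ : ∃ B : ℝ, B = b * (1 - lam*γ) / (1 - lam) := ⟨_, rfl⟩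
  have hA0 : 0 ≤ A := by rw [hAdef]; positivity
  have hlamγ : (0:ℝ) < 1 - lam*γ := by nlinarith
  have hB0 : 0 ≤ B := by rw [hBdef]; positivity
  have hAB : A ≤ B := by
    rw [hAdef, hBdef, le_div_iff₀ h1lam]; nlinarith
  obtain ⟨K, hKdef⟩ : ∃ K : ℝ, K = lam / (1 - lam) := ⟨_, rfl⟩
  have hK0 : 0 < K := by rw [hKdef]; positivity
  obtain ⟨C, hCdef⟩ : ∃ C : ℝ, C = (-L) * (B - A) := ⟨_, rfl⟩
  -- g equals the explicit formula
  have hgG : g = fun s => K * (Real.exp (1/s) * ((1 + A*Real.exp (L*s))/(1 + B*Real.exp (L*s)))) := by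
    funext t
    have hx : γ ^ t = Real.exp (L*t) := by
      rw [hLdef, Real.rpow_def_of_pos hγ0]
    have hx0 : (0:ℝ) < γ ^ t := Real.rpow_pos_of_pos hγ0 t
    have hγt1 : γ ^ (t+1) = γ ^ t * γ := Real.rpow_add_one (ne_of_gt hγ0) t
    have hDpos : (0:ℝ) < 1 + b * γ ^ t := by positivity
    have hBpos : (0:ℝ) < 1 + B * γ ^ t := by positivity
    have h1p : 1 - p t = (1 - lam) * (1 + B * γ ^ t) / (1 + b * γ ^ t) := by
      rw [hp, hγt1, hBdef]
      field_simp
      ring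
    have hpt : p t = lam * (1 + A * γ ^ t) / (1 + b * γ ^ t) := by
      rw [hp, hγt1, hAdef]; ring_nf
    rw [hg, h1p, hpt]
    show _ = K * (Real.exp (1/t) * ((1 + A*Real.exp (L*t))/(1 + B*Real.exp (L*t))))
    rw [← hx, hKdef]
    field_simp
  -- t^2 * exp(L t) → 0 and eventual bound
  have htsq : Tendsto (fun t : ℝ => C * (1+B) * (t^2 * Real.exp (L*t))) atTop (nhds 0) := by
    have h0 : Tendsto (fun x : ℝ => x^2 * Real.exp (-x)) atTop (nhds 0) :=
      Real.tendsto_pow_mul_exp_neg_atTop_nhds_zero 2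
    have hlin : Tendsto (fun t : ℝ => (-L) * t) atTop atTop :=
      Tendsto.const_mul_atTop (by linarith) tendsto_id
    have h1 : Tendsto (fun t : ℝ => ((-L)*t)^2 * Real.exp (-((-L)*t))) atTop (nhds 0) :=
      h0.comp hlin
    have h2 : Tendsto (fun t : ℝ => (C*(1+B)/L^2) * (((-L)*t)^2 * Real.exp (-((-L)*t))))
        atTop (nhds ((C*(1+B)/L^2) * 0)) := h1.const_mul _
    have hLne : L ≠ 0 := ne_of_lt hL
    refine (h2.congr (fun t => ?_)).mono_right (by simp)
    have : -((-L)*t) = L*t := by ring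
    rw [this]
    field_simp
  have hev : ∀ᶠ t : ℝ in atTop, C * (1+B) * (t^2 * Real.exp (L*t)) < 1 :=
    htsq.eventually_lt_const one_pos
  obtain ⟨T0, hT0⟩ := eventually_atTop.mp hev
  refine ⟨max T0 1, lt_of_lt_of_le one_pos (le_max_right _ _), ?_, ?_⟩
  · -- strictly decreasing
    rw [hgG]
    apply strictAntiOn_of_deriv_neg (convex_Ici _)
    · intro x hx
      have hx0 : x ≠ 0 := by
        have : (1:ℝ) ≤ x := le_trans (le_max_right _ _) hx
        linarith
      exact (aux_deriv K A B L x hx0 hB0).continuousAt.continuousWithinAt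
    · intro x hx
      rw [interior_Ici] at hx
      have hx1 : (1:ℝ) < x := lt_of_le_of_lt (le_max_right _ _) hx
      have hx0 : x ≠ 0 := by linarith
      rw [(aux_deriv K A B L x hx0 hB0).deriv]
      have hbig : C * (1+B) * (x^2 * Real.exp (L*x)) < 1 :=
        hT0 x (le_trans (le_max_left _ _) hx.le)
      have hex1 : Real.exp (L*x) ≤ 1 :=
        Real.exp_le_one_iff.mpr (by nlinarith)
      exact aux_ineq K A B L C x (Real.exp (L*x)) (Real.exp (1/x)) hK0 hA0 hB0 hAB
        hCdef hL hx1.le (Real.exp_pos _) hex1 (Real.exp_pos _) hbig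
  · -- limit
    rw [hgG, hKdef]
    have hinv : Tendsto (fun t : ℝ => 1/t) atTop (nhds 0) := by
      simpa [one_div] using tendsto_inv_atTop_zero
    have hexp : Tendsto (fun t : ℝ => Real.exp (1/t)) atTop (nhds 1) := by
      have := (Real.continuous_exp.tendsto 0).comp hinv
      simpa [Function.comp_def] using this
    have he : Tendsto (fun t : ℝ => Real.exp (L*t)) atTop (nhds 0) :=
      Real.tendsto_exp_atBot.comp (Tendsto.const_mul_atTop_of_neg hL tendsto_id)
    have hnum : Tendsto (fun t : ℝ => 1 + A*Real.exp (L*t)) atTop (nhds 1) := by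
      have := (he.const_mul A).const_add (1:ℝ)
      simpa using this
    have hden : Tendsto (fun t : ℝ => 1 + B*Real.exp (L*t)) atTop (nhds 1) := by
      have := (he.const_mul B).const_add (1:ℝ)
      simpa using this
    have hfrac := hnum.div hden one_ne_zero
    have := (hexp.mul hfrac).const_mul (lam/(1-lam))
    simpa using this
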